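/- Let Φ : (0,∞) → ℝ have the Thomas–Fermi potential properties, let λ > 0, and for n ≥ 0 define the canonical energy e(λ,n) = sup_{μ ≥ 0} (e_G(λ,μ) − μn). Then e(λ,n) ≥ e_G(λ,0) for every n ≥ 0, with equality if and only if n ≥ n(λ,0). Moreover e(λ,0) = 0. -/

import Mathlib

open MeasureTheory Real Filter Set

/-- The semiclassical grand canonical energy
`e_G(λ,μ) = −(2/(3π)) ∫₀^∞ (Φ(r) − λ²r⁻² − μ)₊^{3/2} dr`. -/
noncomputable def eG (Φ : ℝ → ℝ) (lam μ : ℝ) : ℝ :=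
  -(2 / (3 * π)) * ∫ r in Ioi (0:ℝ), (max (Φ r - lam ^ 2 / r ^ 2 - μ) 0) ^ ((3:ℝ)/2)

/-- The semiclassical counting function
`n(λ,μ) = (1/π) ∫₀^∞ (Φ(r) − λ²r⁻² − μ)₊^{1/2} dr`. -/
noncomputable def nSC (Φ : ℝ → ℝ) (lam μ : ℝ) : ℝ :=
  (1 / π) * ∫ r in Ioi (0:ℝ), (max (Φ r - lam ^ 2 / r ^ 2 - μ) 0) ^ ((1:ℝ)/2)

/-- `Φ` has the Thomas–Fermi potential properties: continuous and positive on `(0,∞)`,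
`r·Φ(r) → 1` as `r → 0+`, and `Φ(r) ≤ C r⁻⁴` for `r ≥ 1`. -/
def HasTF (Φ : ℝ → ℝ) : Prop :=
  ContinuousOn Φ (Ioi 0) ∧ (∀ r, 0 < r → 0 < Φ r) ∧
  Tendsto (fun r => r * Φ r) (nhdsWithin 0 (Ioi 0)) (nhds 1) ∧
  ∃ C, 0 < C ∧ ∀ r, 1 ≤ r → Φ r ≤ C / r ^ 4

/-- The canonical energy `e(λ,n) = sup_{μ ≥ 0} (e_G(λ,μ) − μn)`. -/
noncomputable def eCan (Φ : ℝ → ℝ) (lam n : ℝ) : ℝ :=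
  sSup ((fun μ => eG Φ lam μ - μ * n) '' Ici 0)


lemma lem_sqrt12 (x : ℝ) : (max x 0) ^ ((1:ℝ)/2) = Real.sqrt (max x 0) := by
  rw [Real.sqrt_eq_rpow]

lemma lem_sqrt32 (x : ℝ) : (max x 0) ^ ((3:ℝ)/2) = (Real.sqrt (max x 0)) ^ 3 := by
  rw [Real.sqrt_eq_rpow, ← Real.rpow_natCast ((max x 0) ^ ((1:ℝ)/2)) 3,
    ← Real.rpow_mul (le_max_right _ _)]
  norm_num

lemma lem_upper {x y : ℝ} (h : y ≤ x) :
    (Real.sqrt (max x 0)) ^ 3 - (Real.sqrt (max y 0)) ^ 3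
      ≤ (3/2) * (x - y) * Real.sqrt (max x 0) := by
  set s := Real.sqrt (max x 0) with hs
  set t := Real.sqrt (max y 0) with ht
  have hs0 : 0 ≤ s := Real.sqrt_nonneg _
  have ht0 : 0 ≤ t := Real.sqrt_nonneg _
  have hs2 : s ^ 2 = max x 0 := Real.sq_sqrt (le_max_right _ _)
  have ht2 : t ^ 2 = max y 0 := Real.sq_sqrt (le_max_right _ _)
  have hts : t ≤ s := Real.sqrt_le_sqrt (max_le_max h le_rfl)
  rcases le_or_gt x 0 with hx | hx
  · have hsx : s = 0 := by
      rw [hs, max_eq_right hx, Real.sqrt_zero]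
    have htx : t = 0 := le_antisymm (hsx ▸ hts) ht0
    simp [hsx, htx]
  · have hsx : s ^ 2 = x := by rw [hs2, max_eq_left hx.le]
    have hty : y ≤ t ^ 2 := by rw [ht2]; exact le_max_left _ _
    nlinarith [mul_nonneg (mul_nonneg (sub_nonneg.2 hts) (sub_nonneg.2 hts)) (by positivity : (0:ℝ) ≤ s + 2*t),
      mul_nonneg (sub_nonneg.2 hty) hs0]

lemma lem_lower {x y : ℝ} (h : y ≤ x) :
    (3/2) * (x - y) * Real.sqrt (max y 0)
      ≤ (Real.sqrt (max x 0)) ^ 3 - (Real.sqrt (max y 0)) ^ 3 := by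
  set s := Real.sqrt (max x 0) with hs
  set t := Real.sqrt (max y 0) with ht
  have hs0 : 0 ≤ s := Real.sqrt_nonneg _
  have ht0 : 0 ≤ t := Real.sqrt_nonneg _
  have hs2 : s ^ 2 = max x 0 := Real.sq_sqrt (le_max_right _ _)
  have ht2 : t ^ 2 = max y 0 := Real.sq_sqrt (le_max_right _ _)
  have hts : t ≤ s := Real.sqrt_le_sqrt (max_le_max h le_rfl)
  rcases le_or_gt y 0 with hy | hy
  · have hty : t = 0 := by rw [ht, max_eq_right hy, Real.sqrt_zero]
    simp [hty]
    positivity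
  · have hty : t ^ 2 = y := by rw [ht2, max_eq_left hy.le]
    have hsx : s ^ 2 = x := by rw [hs2, max_eq_left (hy.le.trans h)]
    nlinarith [mul_nonneg (mul_nonneg (sub_nonneg.2 hts) (sub_nonneg.2 hts)) (by positivity : (0:ℝ) ≤ 2*s + t)]

lemma lem_integrable {f : ℝ → ℝ} (hf : ContinuousOn f (Ioi 0)) {δ R M : ℝ}
    (h0 : ∀ r ∈ Ioi (0:ℝ), r ∉ Icc δ R → f r = 0)
    (hM : ∀ r ∈ Icc δ R, |f r| ≤ M) :
    IntegrableOn f (Ioi 0) := by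
  have hmeas : AEStronglyMeasurable f (volume.restrict (Ioi (0:ℝ))) :=
    hf.aestronglyMeasurable measurableSet_Ioi
  apply Integrable.mono' (g := (Icc δ R).indicator (fun _ => M)) ?_ hmeas
  · rw [ae_restrict_iff' measurableSet_Ioi]
    filter_upwards with r
    intro hr
    by_cases hmem : r ∈ Icc δ R
    · rw [indicator_of_mem hmem, Real.norm_eq_abs]
      exact hM r hmem
    · rw [indicator_of_notMem hmem, Real.norm_eq_abs, h0 r hr hmem]
      simp
  · rw [integrable_indicator_iff measurableSet_Icc]
    refine integrableOn_const (ne_of_lt ?_)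
    calc (volume.restrict (Ioi (0:ℝ))) (Icc δ R) ≤ volume (Icc δ R) :=
          Measure.restrict_apply_le _ _
    _ < ⊤ := measure_Icc_lt_top
lemma lem_support {Φ : ℝ → ℝ} (hΦ : HasTF Φ) {lam : ℝ} (hlam : 0 < lam) :
    ∃ δ R M : ℝ, 0 < δ ∧ δ ≤ R ∧ 0 ≤ M ∧
      (∀ r ∈ Ioi (0:ℝ), r ∉ Icc δ R → Φ r - lam ^ 2 / r ^ 2 ≤ 0) ∧
      (∀ r ∈ Icc δ R, Φ r ≤ M) := by
  obtain ⟨hcont, hpos, htend, C, hC, hCbd⟩ := hΦ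
  -- small r
  have h2 : ∀ᶠ r in nhdsWithin 0 (Ioi 0), r * Φ r < 2 :=
    htend.eventually (eventually_lt_nhds (by norm_num : (1:ℝ) < 2))
  rw [eventually_nhdsWithin_iff, Metric.eventually_nhds_iff] at h2
  obtain ⟨ε, hεpos, hε⟩ := h2
  set δ : ℝ := min (ε/2) (lam ^ 2 / 2) with hδdef
  have hδpos : 0 < δ := lt_min (by positivity) (by positivity)
  have hsmall : ∀ r : ℝ, 0 < r → r < δ → Φ r - lam ^ 2 / r ^ 2 ≤ 0 := by
    intro r hr hrδ
    have hrε : r < ε := by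
      have := min_le_left (ε/2) (lam ^ 2 / 2)
      have : r < ε/2 := lt_of_lt_of_le hrδ this
      linarith
    have h1 : r * Φ r < 2 := hε (by rw [Real.dist_eq, sub_zero, abs_of_pos hr]; exact hrε) hr
    have hΦr : Φ r < 2 / r := by rw [lt_div_iff₀ hr]; linarith [h1]
    have hr2 : (0:ℝ) < r ^ 2 := by positivity
    have : Φ r - lam ^ 2 / r ^ 2 < 2 / r - lam ^ 2 / r ^ 2 := by
      linarith
    have h3 : 2 / r - lam ^ 2 / r ^ 2 ≤ 0 := by
      rw [div_sub_div _ _ (ne_of_gt hr) (ne_of_gt hr2)]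
      apply div_nonpos_of_nonpos_of_nonneg _ (by positivity)
      have hrlam : r ≤ lam ^ 2 / 2 := le_of_lt (hrδ.trans_le (min_le_right _ _))
      nlinarith
    linarith
  -- large r
  set R : ℝ := max δ (max 1 (Real.sqrt C / lam)) with hRdef
  have hR1 : (1:ℝ) ≤ R := le_trans (le_max_left _ _) (le_max_right _ _)
  have hδR : δ ≤ R := le_max_left _ _
  have hbig : ∀ r : ℝ, R < r → Φ r - lam ^ 2 / r ^ 2 ≤ 0 := by
    intro r hrR
    have hr1 : (1:ℝ) ≤ r := hR1.trans hrR.le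
    have hr0 : (0:ℝ) < r := by linarith
    have hsq : Real.sqrt C / lam ≤ r :=
      le_trans (le_trans (le_max_right _ _) (le_max_right _ _)) hrR.le
    have hsq2 : Real.sqrt C ≤ lam * r := by
      rwa [div_le_iff₀ hlam, mul_comm] at hsq
    have hC2 : C ≤ lam ^ 2 * r ^ 2 := by
      nlinarith [Real.sq_sqrt hC.le, Real.sqrt_nonneg C]
    have h4 : Φ r ≤ C / r ^ 4 := hCbd r hr1
    have : C / r ^ 4 ≤ lam ^ 2 / r ^ 2 := by
      rw [div_le_div_iff₀ (by positivity) (by positivity)]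
      nlinarith
    linarith
  -- bound on compact
  have hcpt : IsCompact (Icc δ R) := isCompact_Icc
  have hsub : Icc δ R ⊆ Ioi 0 := fun r hr => lt_of_lt_of_le hδpos hr.1
  obtain ⟨M₀, hM₀⟩ := hcpt.exists_bound_of_continuousOn (hcont.mono hsub)
  refine ⟨δ, R, max M₀ 0, hδpos, hδR, le_max_right _ _, ?_, ?_⟩
  · intro r hr hnot
    rcases lt_or_ge r δ with h | h
    · exact hsmall r hr h
    · apply hbig r
      by_contra hcon
      exact hnot ⟨h, not_lt.mp hcon⟩
  · intro r hr
    calc Φ r ≤ |Φ r| := le_abs_self _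
    _ ≤ M₀ := by simpa [Real.norm_eq_abs] using hM₀ r hr
    _ ≤ max M₀ 0 := le_max_left _ _

/-- For a Thomas–Fermi potential `Φ` and `λ > 0`, the canonical energy
satisfies `e(λ,n) ≥ e_G(λ,0)` for all `n ≥ 0`, with equality iff `n ≥ n(λ,0)`;
moreover `e(λ,0) = 0`. -/
theorem eCan_ge_eG_zero (Φ : ℝ → ℝ) (hΦ : HasTF Φ) (lam : ℝ) (hlam : 0 < lam) :
    (∀ n : ℝ, 0 ≤ n → eG Φ lam 0 ≤ eCan Φ lam n) ∧
    (∀ n : ℝ, 0 ≤ n → (eCan Φ lam n = eG Φ lam 0 ↔ nSC Φ lam 0 ≤ n)) ∧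
    eCan Φ lam 0 = 0 := by
  have hπ : (0:ℝ) < π := Real.pi_pos
  obtain ⟨δ, R, M, hδpos, hδR, hM0, hout, hMin⟩ := lem_support hΦ hlam
  obtain ⟨hcont, hpos, htend, C, hC, hCbd⟩ := hΦ
  -- rewriting the integrands via sqrt
  have heG : ∀ μ : ℝ, eG Φ lam μ
      = -(2/(3*π)) * ∫ r in Ioi (0:ℝ), (Real.sqrt (max (Φ r - lam ^ 2 / r ^ 2 - μ) 0)) ^ 3 := by
    intro μ; rw [eG]; congr 1; apply integral_congr_ae; filter_upwards with r
    exact lem_sqrt32 _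
  have hnS : ∀ μ : ℝ, nSC Φ lam μ
      = (1/π) * ∫ r in Ioi (0:ℝ), Real.sqrt (max (Φ r - lam ^ 2 / r ^ 2 - μ) 0) := by
    intro μ; rw [nSC]; congr 1; apply integral_congr_ae; filter_upwards with r
    exact lem_sqrt12 _
  -- continuity
  have hgc : ∀ μ : ℝ, ContinuousOn
      (fun r => Real.sqrt (max (Φ r - lam ^ 2 / r ^ 2 - μ) 0)) (Ioi 0) := by
    intro μ
    have hV : ContinuousOn (fun r : ℝ => lam ^ 2 / r ^ 2) (Ioi 0) :=
      ContinuousOn.div continuousOn_const ((continuous_pow 2).continuousOn)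
        (fun r hr => pow_ne_zero 2 (ne_of_gt hr))
    have hA : ContinuousOn (fun r => Φ r - lam ^ 2 / r ^ 2 - μ) (Ioi 0) :=
      (hcont.sub hV).sub continuousOn_const
    exact Real.continuous_sqrt.comp_continuousOn (hA.sup continuousOn_const)
  -- vanishing outside the compact region
  have hvan : ∀ μ : ℝ, 0 ≤ μ → ∀ r ∈ Ioi (0:ℝ), r ∉ Icc δ R →
      max (Φ r - lam ^ 2 / r ^ 2 - μ) 0 = 0 := by
    intro μ hμ r hr hnot
    have := hout r hr hnot
    exact max_eq_right (by linarith)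
  -- bound inside
  have hbdd : ∀ μ : ℝ, 0 ≤ μ → ∀ r ∈ Icc δ R,
      max (Φ r - lam ^ 2 / r ^ 2 - μ) 0 ≤ M := by
    intro μ hμ r hr
    have hr0 : (0:ℝ) < r := lt_of_lt_of_le hδpos hr.1
    have h1 : Φ r ≤ M := hMin r hr
    have h2 : (0:ℝ) < lam ^ 2 / r ^ 2 := by positivity
    exact max_le (by linarith) hM0
  -- integrability
  have hint1 : ∀ μ : ℝ, 0 ≤ μ →
      IntegrableOn (fun r => Real.sqrt (max (Φ r - lam ^ 2 / r ^ 2 - μ) 0)) (Ioi 0) := by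
    intro μ hμ
    apply lem_integrable (hgc μ) (M := Real.sqrt M)
    · intro r hr hnot; rw [hvan μ hμ r hr hnot, Real.sqrt_zero]
    · intro r hr
      rw [abs_of_nonneg (Real.sqrt_nonneg _)]
      exact Real.sqrt_le_sqrt (hbdd μ hμ r hr)
  have hint3 : ∀ μ : ℝ, 0 ≤ μ →
      IntegrableOn (fun r => (Real.sqrt (max (Φ r - lam ^ 2 / r ^ 2 - μ) 0)) ^ 3) (Ioi 0) := by
    intro μ hμ
    apply lem_integrable ((hgc μ).pow 3) (M := (Real.sqrt M) ^ 3)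
    · intro r hr hnot; simp only [Pi.pow_apply]; rw [hvan μ hμ r hr hnot, Real.sqrt_zero]; norm_num
    · intro r hr
      simp only [Pi.pow_apply]
      rw [abs_of_nonneg (by positivity)]
      exact pow_le_pow_left₀ (Real.sqrt_nonneg _) (Real.sqrt_le_sqrt (hbdd μ hμ r hr)) 3
  -- nonnegativity of the integrals
  have hI3 : ∀ μ : ℝ, 0 ≤ ∫ r in Ioi (0:ℝ), (Real.sqrt (max (Φ r - lam ^ 2 / r ^ 2 - μ) 0)) ^ 3 :=
    fun μ => setIntegral_nonneg measurableSet_Ioi (fun r _ => by positivity)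
  have hI1 : ∀ μ : ℝ, 0 ≤ ∫ r in Ioi (0:ℝ), Real.sqrt (max (Φ r - lam ^ 2 / r ^ 2 - μ) 0) :=
    fun μ => setIntegral_nonneg measurableSet_Ioi (fun r _ => Real.sqrt_nonneg _)
  have heGle : ∀ μ : ℝ, eG Φ lam μ ≤ 0 := by
    intro μ
    rw [heG μ]
    have := hI3 μ
    have hc : (0:ℝ) < 2/(3*π) := by positivity
    nlinarith
  -- the two key convexity estimates
  have key_up : ∀ μ : ℝ, 0 ≤ μ → eG Φ lam μ - eG Φ lam 0 ≤ μ * nSC Φ lam 0 := by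
    intro μ hμ
    rw [heG μ, heG 0, hnS 0]
    have hsub : (∫ r in Ioi (0:ℝ), (Real.sqrt (max (Φ r - lam ^ 2 / r ^ 2 - 0) 0)) ^ 3)
        - (∫ r in Ioi (0:ℝ), (Real.sqrt (max (Φ r - lam ^ 2 / r ^ 2 - μ) 0)) ^ 3)
        = ∫ r in Ioi (0:ℝ), ((Real.sqrt (max (Φ r - lam ^ 2 / r ^ 2 - 0) 0)) ^ 3
            - (Real.sqrt (max (Φ r - lam ^ 2 / r ^ 2 - μ) 0)) ^ 3) :=
      (integral_sub (hint3 0 le_rfl) (hint3 μ hμ)).symm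
    have hmono : (∫ r in Ioi (0:ℝ), ((Real.sqrt (max (Φ r - lam ^ 2 / r ^ 2 - 0) 0)) ^ 3
            - (Real.sqrt (max (Φ r - lam ^ 2 / r ^ 2 - μ) 0)) ^ 3))
        ≤ ∫ r in Ioi (0:ℝ), (3/2) * μ * Real.sqrt (max (Φ r - lam ^ 2 / r ^ 2 - 0) 0) := by
      apply setIntegral_mono_on ((hint3 0 le_rfl).sub (hint3 μ hμ))
        ((hint1 0 le_rfl).const_mul _) measurableSet_Ioi
      intro r _
      have h := lem_upper (x := Φ r - lam ^ 2 / r ^ 2 - 0)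
        (y := Φ r - lam ^ 2 / r ^ 2 - μ) (by linarith)
      have hxy : (Φ r - lam ^ 2 / r ^ 2 - 0) - (Φ r - lam ^ 2 / r ^ 2 - μ) = μ := by ring
      rw [hxy] at h
      exact h
    rw [MeasureTheory.integral_const_mul] at hmono
    set J0 := ∫ r in Ioi (0:ℝ), (Real.sqrt (max (Φ r - lam ^ 2 / r ^ 2 - 0) 0)) ^ 3
    set Jμ := ∫ r in Ioi (0:ℝ), (Real.sqrt (max (Φ r - lam ^ 2 / r ^ 2 - μ) 0)) ^ 3
    set K0 := ∫ r in Ioi (0:ℝ), Real.sqrt (max (Φ r - lam ^ 2 / r ^ 2 - 0) 0)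
    have hπne : π ≠ 0 := ne_of_gt hπ
    have : J0 - Jμ ≤ 3/2 * μ * K0 := by rw [hsub]; exact hmono
    have hgoal : -(2/(3*π)) * Jμ - -(2/(3*π)) * J0 = (2/(3*π)) * (J0 - Jμ) := by ring
    rw [hgoal]
    calc (2/(3*π)) * (J0 - Jμ) ≤ (2/(3*π)) * (3/2 * μ * K0) := by
          apply mul_le_mul_of_nonneg_left this (by positivity)
    _ = μ * (1/π * K0) := by field_simp
  have key_low : ∀ μ : ℝ, 0 ≤ μ → μ * nSC Φ lam μ ≤ eG Φ lam μ - eG Φ lam 0 := by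
    intro μ hμ
    rw [heG μ, heG 0, hnS μ]
    have hsub : (∫ r in Ioi (0:ℝ), (Real.sqrt (max (Φ r - lam ^ 2 / r ^ 2 - 0) 0)) ^ 3)
        - (∫ r in Ioi (0:ℝ), (Real.sqrt (max (Φ r - lam ^ 2 / r ^ 2 - μ) 0)) ^ 3)
        = ∫ r in Ioi (0:ℝ), ((Real.sqrt (max (Φ r - lam ^ 2 / r ^ 2 - 0) 0)) ^ 3
            - (Real.sqrt (max (Φ r - lam ^ 2 / r ^ 2 - μ) 0)) ^ 3) :=
      (integral_sub (hint3 0 le_rfl) (hint3 μ hμ)).symm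
    have hmono : (∫ r in Ioi (0:ℝ), (3/2) * μ * Real.sqrt (max (Φ r - lam ^ 2 / r ^ 2 - μ) 0))
        ≤ ∫ r in Ioi (0:ℝ), ((Real.sqrt (max (Φ r - lam ^ 2 / r ^ 2 - 0) 0)) ^ 3
            - (Real.sqrt (max (Φ r - lam ^ 2 / r ^ 2 - μ) 0)) ^ 3) := by
      apply setIntegral_mono_on ((hint1 μ hμ).const_mul _)
        ((hint3 0 le_rfl).sub (hint3 μ hμ)) measurableSet_Ioi
      intro r _
      have h := lem_lower (x := Φ r - lam ^ 2 / r ^ 2 - 0)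
        (y := Φ r - lam ^ 2 / r ^ 2 - μ) (by linarith)
      have hxy : (Φ r - lam ^ 2 / r ^ 2 - 0) - (Φ r - lam ^ 2 / r ^ 2 - μ) = μ := by ring
      rw [hxy] at h
      exact h
    rw [MeasureTheory.integral_const_mul] at hmono
    set J0 := ∫ r in Ioi (0:ℝ), (Real.sqrt (max (Φ r - lam ^ 2 / r ^ 2 - 0) 0)) ^ 3
    set Jμ := ∫ r in Ioi (0:ℝ), (Real.sqrt (max (Φ r - lam ^ 2 / r ^ 2 - μ) 0)) ^ 3
    set Kμ := ∫ r in Ioi (0:ℝ), Real.sqrt (max (Φ r - lam ^ 2 / r ^ 2 - μ) 0)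
    have hπne : π ≠ 0 := ne_of_gt hπ
    have h5 : 3/2 * μ * Kμ ≤ J0 - Jμ := by rw [hsub]; exact hmono
    have hgoal : -(2/(3*π)) * Jμ - -(2/(3*π)) * J0 = (2/(3*π)) * (J0 - Jμ) := by ring
    rw [hgoal]
    calc μ * (1/π * Kμ) = (2/(3*π)) * (3/2 * μ * Kμ) := by field_simp
    _ ≤ (2/(3*π)) * (J0 - Jμ) := by
          apply mul_le_mul_of_nonneg_left h5 (by positivity)
  -- the sup set
  have hmem : ∀ n μ : ℝ, 0 ≤ μ →
      eG Φ lam μ - μ * n ∈ (fun μ => eG Φ lam μ - μ * n) '' Ici 0 :=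
    fun n μ hμ => ⟨μ, hμ, rfl⟩
  have hne : ∀ n : ℝ, ((fun μ => eG Φ lam μ - μ * n) '' Ici 0).Nonempty :=
    fun n => ⟨_, hmem n 0 le_rfl⟩
  have hbddA : ∀ n : ℝ, 0 ≤ n → BddAbove ((fun μ => eG Φ lam μ - μ * n) '' Ici 0) := by
    intro n hn
    refine ⟨0, ?_⟩
    rintro x ⟨μ, hμ, rfl⟩
    have h1 := heGle μ
    have h2 : 0 ≤ μ * n := mul_nonneg hμ hn
    simp only
    linarith
  -- Part 1
  have part1 : ∀ n : ℝ, 0 ≤ n → eG Φ lam 0 ≤ eCan Φ lam n := by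
    intro n hn
    have h : eG Φ lam 0 - 0 * n ≤ eCan Φ lam n :=
      le_csSup (hbddA n hn) (hmem n 0 le_rfl)
    linarith [h, zero_mul n]
  -- eG at μ = M vanishes
  have heGM : eG Φ lam M = 0 := by
    rw [heG M]
    have hz : ∀ r ∈ Ioi (0:ℝ),
        (Real.sqrt (max (Φ r - lam ^ 2 / r ^ 2 - M) 0)) ^ 3 = (0:ℝ) := by
      intro r hr
      have hmax : max (Φ r - lam ^ 2 / r ^ 2 - M) 0 = 0 := by
        by_cases hmemI : r ∈ Icc δ R
        · have h1 : Φ r ≤ M := hMin r hmemI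
          have hr0 : (0:ℝ) < r := hr
          have h2 : (0:ℝ) < lam ^ 2 / r ^ 2 := by positivity
          exact max_eq_right (by linarith)
        · have := hout r hr hmemI
          exact max_eq_right (by linarith)
      rw [hmax, Real.sqrt_zero]; norm_num
    rw [setIntegral_congr_fun measurableSet_Ioi hz, integral_zero, mul_zero]
  -- Part 3
  have part3 : eCan Φ lam 0 = 0 := by
    apply le_antisymm
    · apply csSup_le (hne 0)
      rintro x ⟨μ, hμ, rfl⟩
      have := heGle μ
      simp only [mul_zero]
      linarith
    · have h : eG Φ lam M - M * 0 ≤ eCan Φ lam 0 :=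
        le_csSup (hbddA 0 le_rfl) (hmem 0 M hM0)
      rw [heGM] at h
      simp only [mul_zero, zero_sub, neg_zero] at h
      exact h
  -- Part 2
  have part2 : ∀ n : ℝ, 0 ≤ n → (eCan Φ lam n = eG Φ lam 0 ↔ nSC Φ lam 0 ≤ n) := by
    intro n hn
    constructor
    · -- forward: contrapositive
      intro heq
      by_contra hlt
      push_neg at hlt
      -- dominated convergence: nSC(1/(k+1)) → nSC(0)
      have hDCT : Tendsto (fun k : ℕ => nSC Φ lam (1/((k:ℝ)+1))) atTop
          (nhds (nSC Φ lam 0)) := by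
        have hInt : Tendsto (fun k : ℕ =>
            ∫ r in Ioi (0:ℝ), Real.sqrt (max (Φ r - lam ^ 2 / r ^ 2 - 1/((k:ℝ)+1)) 0))
            atTop (nhds (∫ r in Ioi (0:ℝ), Real.sqrt (max (Φ r - lam ^ 2 / r ^ 2 - 0) 0))) := by
          apply tendsto_integral_of_dominated_convergence
            (fun r => Real.sqrt (max (Φ r - lam ^ 2 / r ^ 2 - 0) 0))
          · intro k
            exact (hgc (1/((k:ℝ)+1))).aestronglyMeasurable measurableSet_Ioi
          · exact hint1 0 le_rfl
          · intro k
            filter_upwards with r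
            rw [Real.norm_eq_abs, abs_of_nonneg (Real.sqrt_nonneg _)]
            apply Real.sqrt_le_sqrt
            apply max_le_max _ le_rfl
            have hk : (0:ℝ) ≤ 1/((k:ℝ)+1) := by positivity
            linarith
          · filter_upwards with r
            have h1 : Tendsto (fun k : ℕ => (1:ℝ)/((k:ℝ)+1)) atTop (nhds 0) :=
              tendsto_one_div_add_atTop_nhds_zero_nat
            have h2 : Tendsto (fun k : ℕ => Φ r - lam ^ 2 / r ^ 2 - 1/((k:ℝ)+1)) atTop
                (nhds (Φ r - lam ^ 2 / r ^ 2 - 0)) :=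
              tendsto_const_nhds.sub h1
            have h3 : Continuous (fun z : ℝ => Real.sqrt (max z 0)) :=
              Real.continuous_sqrt.comp (continuous_id.max continuous_const)
            exact (h3.tendsto _).comp h2
        have : (fun k : ℕ => nSC Φ lam (1/((k:ℝ)+1)))
            = fun k : ℕ => (1/π) * ∫ r in Ioi (0:ℝ),
                Real.sqrt (max (Φ r - lam ^ 2 / r ^ 2 - 1/((k:ℝ)+1)) 0) := by
          funext k; exact hnS _
        rw [this, hnS 0]
        exact hInt.const_mul _
      obtain ⟨k, hk⟩ := (hDCT.eventually (eventually_gt_nhds hlt)).exists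
      set μ₀ : ℝ := 1/((k:ℝ)+1) with hμ₀
      have hμ₀pos : (0:ℝ) < μ₀ := by positivity
      have h1 := key_low μ₀ hμ₀pos.le
      have h2 : eG Φ lam μ₀ - μ₀ * n ≤ eCan Φ lam n :=
        le_csSup (hbddA n hn) (hmem n μ₀ hμ₀pos.le)
      rw [heq] at h2
      have h3 : μ₀ * n < μ₀ * nSC Φ lam μ₀ :=
        mul_lt_mul_of_pos_left hk hμ₀pos
      linarith
    · -- backward
      intro hge
      apply le_antisymm _ (part1 n hn)
      apply csSup_le (hne n)
      rintro x ⟨μ, hμ, rfl⟩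
      have h1 := key_up μ hμ
      have h2 : μ * nSC Φ lam 0 ≤ μ * n := mul_le_mul_of_nonneg_left hge hμ
      simp only
      linarith
  exact ⟨part1, part2, part3⟩
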